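/- Let ℓ > 0 be a real number, n ≥ 1, and y ∈ ℝ^n with y_a ≥ 0 for all a. For m ∈ ℕ set I(m) := #{a : m·ℓ ≤ y_a < (m+1)·ℓ}. Then for any i ≥ 1 and any pairwise disjoint y-chains Γ_1, …, Γ_i one has |Γ_1| + ⋯ + |Γ_i| ≤ Σ_{m ≥ 0} min(i, I(m)). -/

import Mathlib

/-!
STATEMENT 9. Let `ℓ > 0` be a real number, `n ≥ 1`, and `y ∈ ℝ^n` with `y_a ≥ 0`
for all `a`.  For `m ∈ ℕ` set `I(m) := #{a : m·ℓ ≤ y_a < (m+1)·ℓ}`.  Then for any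
`i ≥ 1` and any pairwise disjoint `y`-chains `Γ_1, …, Γ_i` one has
`|Γ_1| + ⋯ + |Γ_i| ≤ Σ_{m ≥ 0} min(i, I(m))`.
(The sum over `m ≥ 0` has finite support: `I(m) = 0` once `m·ℓ` exceeds all the
`y_a`, so it is expressed as a sum over `m < M` for any bound `M` with
`y_a < M·ℓ` for all `a`.)
-/

/-- A `y`-chain: a set of indices whose `y`-values pairwise differ by at least `ℓ`. -/
def IsYChainR {n : ℕ} (ℓ : ℝ) (y : Fin n → ℝ) (S : Finset (Fin n)) : Prop :=
  ∀ a ∈ S, ∀ b ∈ S, a ≠ b → ℓ ≤ |y a - y b|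

theorem disjoint_chains_card_le
    (n : ℕ) (hn : 1 ≤ n) (ℓ : ℝ) (hℓ : 0 < ℓ)
    (y : Fin n → ℝ) (hy : ∀ a, 0 ≤ y a)
    (i : ℕ) (hi : 1 ≤ i)
    (Γ : Fin i → Finset (Fin n))
    (hdisj : ∀ a b, a ≠ b → Disjoint (Γ a) (Γ b))
    (hchain : ∀ a, IsYChainR ℓ y (Γ a))
    (M : ℕ) (hM : ∀ a, y a < (M : ℝ) * ℓ) :
    ∑ a, (Γ a).card ≤
      ∑ m ∈ Finset.range M,
        min i (Finset.univ.filter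
          (fun a : Fin n => (m : ℝ) * ℓ ≤ y a ∧ y a < ((m : ℝ) + 1) * ℓ)).card := by
  classical
  set B : ℕ → Finset (Fin n) := fun m =>
    Finset.univ.filter
      (fun a : Fin n => (m : ℝ) * ℓ ≤ y a ∧ y a < ((m : ℝ) + 1) * ℓ) with hB
  -- floor characterization of buckets
  have hfloor : ∀ a m, Nat.floor (y a / ℓ) = m ↔
      ((m : ℝ) * ℓ ≤ y a ∧ y a < ((m : ℝ) + 1) * ℓ) := by
    intro a m
    rw [Nat.floor_eq_iff (div_nonneg (hy a) hℓ.le)]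
    constructor
    · rintro ⟨h1, h2⟩
      constructor
      · calc (m : ℝ) * ℓ ≤ (y a / ℓ) * ℓ := by
              exact mul_le_mul_of_nonneg_right h1 hℓ.le
          _ = y a := div_mul_cancel₀ _ hℓ.ne'
      · calc y a = (y a / ℓ) * ℓ := (div_mul_cancel₀ _ hℓ.ne').symm
          _ < ((m : ℝ) + 1) * ℓ := by
              exact mul_lt_mul_of_pos_right h2 hℓ
    · rintro ⟨h1, h2⟩
      constructor
      · exact (le_div_iff₀ hℓ).mpr h1
      · exact (div_lt_iff₀ hℓ).mpr h2
  -- each set's cardinality decomposes over buckets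
  have hcard : ∀ S : Finset (Fin n), S.card = ∑ m ∈ Finset.range M, (S ∩ B m).card := by
    intro S
    have := Finset.card_eq_sum_card_fiberwise
      (f := fun a : Fin n => Nat.floor (y a / ℓ)) (s := S) (t := Finset.range M)
      (by
        intro a _
        rw [Finset.mem_coe, Finset.mem_range]
        have : y a / ℓ < (M : ℝ) := (div_lt_iff₀ hℓ).mpr (hM a)
        exact Nat.floor_lt (div_nonneg (hy a) hℓ.le) |>.mpr this)
    rw [this]
    refine Finset.sum_congr rfl fun m _ => ?_
    congr 1
    ext a
    simp only [Finset.mem_filter, Finset.mem_inter, hB, Finset.mem_univ, true_and]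
    rw [hfloor a m]
  calc ∑ a, (Γ a).card = ∑ a, ∑ m ∈ Finset.range M, (Γ a ∩ B m).card := by
        exact Finset.sum_congr rfl fun a _ => hcard (Γ a)
    _ = ∑ m ∈ Finset.range M, ∑ a, (Γ a ∩ B m).card := Finset.sum_comm
    _ ≤ ∑ m ∈ Finset.range M, min i (B m).card := by
        refine Finset.sum_le_sum fun m _ => ?_
        refine le_min ?_ ?_
        · -- each chain meets each bucket at most once
          calc ∑ a, (Γ a ∩ B m).card ≤ ∑ _a : Fin i, 1 := by
                refine Finset.sum_le_sum fun j _ => ?_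
                rw [Finset.card_le_one]
                intro a ha b hb
                simp only [Finset.mem_inter, hB, Finset.mem_filter] at ha hb
                by_contra hab
                have hc := hchain j a ha.1 b hb.1 hab
                have h1 := ha.2.2
                have h2 := hb.2.2
                rcases abs_cases (y a - y b) with ⟨he, _⟩ | ⟨he, _⟩ <;> nlinarith
            _ = i := by simp
        · -- disjointness: total intersection ≤ bucket size
          have hbi : (Finset.univ.biUnion (fun j : Fin i => Γ j ∩ B m)).card
              = ∑ j, (Γ j ∩ B m).card := by
            apply Finset.card_biUnion
            intro a _ b _ hab
            exact (hdisj a b hab).mono (Finset.inter_subset_left) (Finset.inter_subset_left)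
          rw [← hbi]
          apply Finset.card_le_card
          intro x hx
          simp only [Finset.mem_biUnion, Finset.mem_inter] at hx
          obtain ⟨j, _, _, h⟩ := hx
          exact h
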